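/- Full collusion attack on Eskeland (end-to-end): let N > 1, g a unit of Z/NZ with g^φ = 1 (φ > 0). Suppose colluding users hold (e_i, d_i) and (e_j, d_j) with d_i = z_i*u + v_i*φ, d_j = z_j*u + v_j*φ, e_i ≡ z_i and e_j ≡ z_j (mod φ), and suppose a*e_i - b*e_j = 1 for integers a, b. Then for any finite set W' of integers z'_k (k ∈ W') congruent mod φ to public keys e'_k, the value g^{(a*d_i - b*d_j) * ∏_{k∈W'} e'_k} equals the group key g^{u * ∏_{k∈W'} z'_k}. -/

import Mathlib

private lemma zpow_congr_aux {N φ : ℕ} (g : (ZMod N)ˣ) (hgφ : g ^ φ = 1)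
    {x y : ℤ} (h : x ≡ y [ZMOD (φ : ℤ)]) : g ^ x = g ^ y := by
  have hd : (φ : ℤ) ∣ x - y := Int.ModEq.dvd h.symm
  obtain ⟨k, hk⟩ := hd
  have hx : x = y + (φ : ℤ) * k := by linarith
  rw [hx, zpow_add, zpow_mul, zpow_natCast, hgφ, one_zpow, mul_one]

theorem stmt_14 (N : ℕ) (hN : 1 < N) (g : (ZMod N)ˣ)
    (φ : ℕ) (hφ : 0 < φ) (hgφ : g ^ φ = 1)
    (u zi zj vi vj ei ej di dj a b : ℤ)
    (hdi : di = zi * u + vi * (φ : ℤ)) (hdj : dj = zj * u + vj * (φ : ℤ))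
    (hei : ei ≡ zi [ZMOD (φ : ℤ)]) (hej : ej ≡ zj [ZMOD (φ : ℤ)])
    (hab : a * ei - b * ej = 1)
    (ι : Type*) (W' : Finset ι) (z' e' : ι → ℤ)
    (hcong : ∀ k ∈ W', e' k ≡ z' k [ZMOD (φ : ℤ)]) :
    g ^ ((a * di - b * dj) * ∏ k ∈ W', e' k) = g ^ (u * ∏ k ∈ W', z' k) := by
  apply zpow_congr_aux g hgφ
  classical
  have hprod : (∏ k ∈ W', e' k) ≡ (∏ k ∈ W', z' k) [ZMOD (φ : ℤ)] := by
    induction W' using Finset.induction with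
    | empty => rfl
    | insert _ _ hx ih =>
      rw [Finset.prod_insert hx, Finset.prod_insert hx]
      exact (hcong _ (Finset.mem_insert_self _ _)).mul
        (ih fun k hk => hcong k (Finset.mem_insert_of_mem hk))
  have h1 : (a * di - b * dj) ≡ u [ZMOD (φ : ℤ)] := by
    have : a * di - b * dj = (a * zi - b * zj) * u + (a * vi - b * vj) * (φ : ℤ) := by
      rw [hdi, hdj]; ring
    rw [this]
    calc (a * zi - b * zj) * u + (a * vi - b * vj) * (φ : ℤ)
        ≡ (a * zi - b * zj) * u + 0 [ZMOD (φ : ℤ)] := by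
          exact Int.ModEq.add_left _ (Int.modEq_zero_iff_dvd.mpr (dvd_mul_left _ _))
      _ ≡ (a * ei - b * ej) * u [ZMOD (φ : ℤ)] := by
          rw [add_zero]
          exact Int.ModEq.mul_right u
            (Int.ModEq.sub ((Int.ModEq.mul_left a) hei.symm) ((Int.ModEq.mul_left b) hej.symm))
      _ = u := by rw [hab, one_mul]
  exact h1.mul hprod
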